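/- Let E be the elliptic curve over ℂ(u) defined by Y² = X³ + 4u³X² − 4u³X. Then the point P = (1, −1) lies on E and has infinite order in the group of ℂ(u)-rational points, i.e., n·P ≠ O for every nonzero integer n. -/

import Mathlib

open WeierstrassCurve

/-- The parameter `u` of the base `ℙ¹`, as an element of `ℂ(u)`. -/
noncomputable def uu : RatFunc ℂ := RatFunc.X

/-- Fibration 3: the elliptic curve `Y² = X³ + 4u³X² − 4u³X` over `ℂ(u)`. -/
noncomputable def W3 : WeierstrassCurve.Affine (RatFunc ℂ) :=
  { a₁ := 0, a₂ := 4 * uu ^ 3, a₃ := 0, a₄ := -(4 * uu ^ 3), a₆ := 0 }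


instance : CharZero (RatFunc ℂ) :=
  charZero_of_injective_algebraMap (algebraMap ℂ (RatFunc ℂ)).injective

/-- `f` has no pole at `u = 0` and its value there is `c`. -/
def Val (f : RatFunc ℂ) (c : ℂ) : Prop :=
  ∃ p q : Polynomial ℂ, q.eval 0 ≠ 0 ∧
    f * algebraMap (Polynomial ℂ) (RatFunc ℂ) q = algebraMap (Polynomial ℂ) (RatFunc ℂ) p ∧
    p.eval 0 = c * q.eval 0

lemma val_unique {f : RatFunc ℂ} {a b : ℂ} (ha : Val f a) (hb : Val f b) : a = b := by
  obtain ⟨p, q, hq, hpq, hp⟩ := ha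
  obtain ⟨r, s, hs, hrs, hr⟩ := hb
  have key : algebraMap (Polynomial ℂ) (RatFunc ℂ) (p * s)
      = algebraMap (Polynomial ℂ) (RatFunc ℂ) (r * q) := by
    rw [map_mul, map_mul, ← hpq, ← hrs]; ring
  have key2 : p * s = r * q := IsFractionRing.injective (Polynomial ℂ) (RatFunc ℂ) key
  have h0 := congrArg (Polynomial.eval 0) key2
  simp only [Polynomial.eval_mul, hp, hr] at h0
  have h2 : (a - b) * (q.eval 0 * s.eval 0) = 0 := by linear_combination h0
  exact sub_eq_zero.mp ((mul_eq_zero.mp h2).resolve_right (mul_ne_zero hq hs))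

lemma val_add {f g : RatFunc ℂ} {a b : ℂ} (hf : Val f a) (hg : Val g b) :
    Val (f + g) (a + b) := by
  obtain ⟨p, q, hq, hpq, hp⟩ := hf
  obtain ⟨r, s, hs, hrs, hr⟩ := hg
  refine ⟨p * s + r * q, q * s, by simp [hq, hs], ?_, by simp [hp, hr]; ring⟩
  simp only [map_add, map_mul]
  linear_combination (algebraMap (Polynomial ℂ) (RatFunc ℂ) s) * hpq
    + (algebraMap (Polynomial ℂ) (RatFunc ℂ) q) * hrs

lemma val_mul {f g : RatFunc ℂ} {a b : ℂ} (hf : Val f a) (hg : Val g b) :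
    Val (f * g) (a * b) := by
  obtain ⟨p, q, hq, hpq, hp⟩ := hf
  obtain ⟨r, s, hs, hrs, hr⟩ := hg
  refine ⟨p * r, q * s, by simp [hq, hs], ?_, by simp [hp, hr]; ring⟩
  simp only [map_mul]
  linear_combination (g * algebraMap (Polynomial ℂ) (RatFunc ℂ) s) * hpq
    + (algebraMap (Polynomial ℂ) (RatFunc ℂ) p) * hrs

lemma val_neg {f : RatFunc ℂ} {a : ℂ} (hf : Val f a) : Val (-f) (-a) := by
  obtain ⟨p, q, hq, hpq, hp⟩ := hf
  exact ⟨-p, q, hq, by rw [map_neg, ← hpq]; ring, by simp [hp]⟩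

lemma val_sub {f g : RatFunc ℂ} {a b : ℂ} (hf : Val f a) (hg : Val g b) :
    Val (f - g) (a - b) := by
  simpa [sub_eq_add_neg] using val_add hf (val_neg hg)

lemma val_C (c : ℂ) : Val (algebraMap ℂ (RatFunc ℂ) c) c := by
  refine ⟨Polynomial.C c, 1, by simp, ?_, by simp⟩
  rw [map_one, mul_one, RatFunc.algebraMap_C, RatFunc.algebraMap_eq_C]

lemma val_one : Val 1 1 := by simpa using val_C 1

lemma val_natCast (n : ℕ) : Val (n : RatFunc ℂ) (n : ℂ) := by simpa using val_C (n : ℂ)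

lemma val_ofNat (n : ℕ) [n.AtLeastTwo] :
    Val (OfNat.ofNat n : RatFunc ℂ) (OfNat.ofNat n : ℂ) := by
  have := val_C (OfNat.ofNat n : ℂ)
  rwa [map_ofNat] at this

lemma val_X : Val uu 0 := by
  refine ⟨Polynomial.X, 1, by simp, ?_, by simp⟩
  rw [map_one, mul_one, uu, RatFunc.algebraMap_X]

lemma val_pow {f : RatFunc ℂ} {a : ℂ} (hf : Val f a) (k : ℕ) : Val (f ^ k) (a ^ k) := by
  induction k with
  | zero => simpa using val_one
  | succ k ih => rw [pow_succ, pow_succ]; exact val_mul ih hf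

lemma val_inv {f : RatFunc ℂ} {a : ℂ} (hf : Val f a) (ha : a ≠ 0) : Val f⁻¹ a⁻¹ := by
  obtain ⟨p, q, hq, hpq, hp⟩ := hf
  have hp0 : p.eval 0 ≠ 0 := by rw [hp]; exact mul_ne_zero ha hq
  have hpz : p ≠ 0 := fun h => hp0 (by simp [h])
  have hf0 : f ≠ 0 := by
    intro h
    rw [h, zero_mul] at hpq
    exact hpz ((map_eq_zero_iff _ (IsFractionRing.injective (Polynomial ℂ) (RatFunc ℂ))).mp
      hpq.symm)
  refine ⟨q, p, hp0, ?_, by rw [hp, ← mul_assoc, inv_mul_cancel₀ ha, one_mul]⟩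
  rw [← hpq, ← mul_assoc, inv_mul_cancel₀ hf0, one_mul]

lemma val_div {f g : RatFunc ℂ} {a b : ℂ} (hf : Val f a) (hg : Val g b) (hb : b ≠ 0) :
    Val (f / g) (a / b) := by
  rw [div_eq_mul_inv, div_eq_mul_inv]
  exact val_mul hf (val_inv hg hb)

lemma val_congr {f : RatFunc ℂ} {a b : ℂ} (hf : Val f a) (e : a = b) : Val f b := e ▸ hf

lemma arith_l (m : ℂ) (hm0 : m ≠ 0) (hm1 : m + 1 ≠ 0) (hinv : (m^2)⁻¹ - 1 ≠ 0) :
    (-(m^3)⁻¹ - (-1)) / ((m^2)⁻¹ - 1) = -(m^2+m+1)/(m*(m+1)) := by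
  rw [div_eq_div_iff hinv (mul_ne_zero hm0 hm1)]
  field_simp
  ring

lemma arith1 (m : ℂ) (hm0 : m ≠ 0) (hm1 : m + 1 ≠ 0) (hinv : (m^2)⁻¹ - 1 ≠ 0) :
    ((-(m^3)⁻¹ - (-1)) / ((m^2)⁻¹ - 1))^2 - (m^2)⁻¹ - 1 = ((m+1)^2)⁻¹ := by
  rw [arith_l m hm0 hm1 hinv]
  field_simp
  ring

lemma arith2 (m : ℂ) (hm0 : m ≠ 0) (hm1 : m + 1 ≠ 0) (hinv : (m^2)⁻¹ - 1 ≠ 0) :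
    -(((-(m^3)⁻¹ - (-1)) / ((m^2)⁻¹ - 1)) *
        ((((-(m^3)⁻¹ - (-1)) / ((m^2)⁻¹ - 1))^2 - (m^2)⁻¹ - 1) - (m^2)⁻¹) + (-(m^3)⁻¹))
      = -((m+1)^3)⁻¹ := by
  rw [arith1 m hm0 hm1 hinv, arith_l m hm0 hm1 hinv]
  field_simp
  ring


lemma W3_a₁ : W3.a₁ = 0 := rfl
lemma W3_a₂ : W3.a₂ = 4 * uu ^ 3 := rfl
lemma W3_a₃ : W3.a₃ = 0 := rfl
lemma W3_a₄ : W3.a₄ = -(4 * uu ^ 3) := rfl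
lemma W3_a₆ : W3.a₆ = 0 := rfl

lemma val_zero : Val 0 0 := by simpa using val_C 0

lemma val_a₂ : Val W3.a₂ 0 := by
  rw [W3_a₂]
  exact val_congr (val_mul (val_ofNat 4) (val_pow val_X 3)) (by norm_num)

lemma val_a₄ : Val W3.a₄ 0 := by
  rw [W3_a₄]
  exact val_congr (val_neg (val_mul (val_ofNat 4) (val_pow val_X 3))) (by norm_num)

lemma negY_eq (x y : RatFunc ℂ) : W3.negY x y = -y := by
  rw [WeierstrassCurve.Affine.negY, W3_a₁, W3_a₃]; ring

lemma hP3 : W3.Nonsingular 1 (-1) := by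
  rw [WeierstrassCurve.Affine.nonsingular_iff, WeierstrassCurve.Affine.equation_iff,
    W3_a₁, W3_a₂, W3_a₃, W3_a₄, W3_a₆]
  refine ⟨by ring, Or.inr ?_⟩
  norm_num

lemma val_addX {x L : RatFunc ℂ} {c l : ℂ} (hx : Val x c) (hL : Val L l) :
    Val (W3.addX x 1 L) (l ^ 2 - c - 1) := by
  have e : W3.addX x 1 L = L ^ 2 + W3.a₁ * L - W3.a₂ - x - 1 := rfl
  rw [e, W3_a₁]
  exact val_congr
    (val_sub (val_sub (val_sub (val_add (val_pow hL 2) (val_mul val_zero hL)) val_a₂) hx)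
      val_one) (by ring)

lemma val_addY {x y L : RatFunc ℂ} {c d l : ℂ} (hx : Val x c) (hy : Val y d) (hL : Val L l) :
    Val (W3.addY x 1 y L) (-(l * ((l ^ 2 - c - 1) - c) + d)) := by
  have e : W3.addY x 1 y L = -(L * (W3.addX x 1 L - x) + y) := by
    rw [WeierstrassCurve.Affine.addY, WeierstrassCurve.Affine.negAddY, negY_eq]
  rw [e]
  exact val_neg (val_add (val_mul hL (val_sub (val_addX hx hL) hx)) hy)

open scoped Classical in
open WeierstrassCurve.Affine in
lemma key (hP : W3.Nonsingular 1 (-1)) : ∀ n : ℕ,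
    ∃ (x y : RatFunc ℂ) (h : W3.Nonsingular x y),
      (n + 1) • (Point.some _ _ hP) = Point.some _ _ h ∧
      Val x ((((n : ℂ) + 1) ^ 2)⁻¹) ∧ Val y (-(((n : ℂ) + 1) ^ 3)⁻¹) := by
  intro n
  induction n with
  | zero =>
    refine ⟨1, -1, hP, by exact one_nsmul _, ?_, ?_⟩
    · exact val_congr val_one (by norm_num)
    · exact val_congr (val_neg val_one) (by norm_num)
  | succ k ih =>
    obtain ⟨x, y, h, hsmul, hvx, hvy⟩ := ih
    rcases Nat.eq_zero_or_pos k with hk | hk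
    · -- doubling: 2 • P = P + P
      subst hk
      have hy1 : (-1 : RatFunc ℂ) ≠ W3.negY 1 (-1) := by rw [negY_eq]; norm_num
      have hs2 : ((0 : ℕ) + 1 + 1) • Point.some _ _ hP = Point.some _ _ hP + Point.some _ _ hP := by
        rw [succ_nsmul]
        rw [one_nsmul]
      refine ⟨W3.addX 1 1 (W3.slope 1 1 (-1) (-1)), W3.addY 1 1 (-1) (W3.slope 1 1 (-1) (-1)),
        nonsingular_add hP hP fun hxy => hy1 hxy.right, ?_, ?_, ?_⟩
      · rw [hs2, Point.add_of_Y_ne hy1]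
      · have hL : Val (W3.slope 1 1 (-1) (-1)) (3 / (-2)) := by
          rw [slope_of_Y_ne rfl hy1, negY_eq, W3_a₁]
          refine val_div ?_ ?_ (by norm_num)
          · exact val_congr (val_sub (val_add (val_add
              (val_mul (val_ofNat 3) (val_pow val_one 2))
              (val_mul (val_mul (val_ofNat 2) val_a₂) val_one)) val_a₄)
              (val_mul val_zero (val_neg val_one))) (by norm_num)
          · exact val_congr (val_sub (val_neg val_one) (val_neg (val_neg val_one)))
              (by norm_num)
        exact val_congr (val_addX val_one hL) (by norm_num)
      · have hL : Val (W3.slope 1 1 (-1) (-1)) (3 / (-2)) := by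
          rw [slope_of_Y_ne rfl hy1, negY_eq, W3_a₁]
          refine val_div ?_ ?_ (by norm_num)
          · exact val_congr (val_sub (val_add (val_add
              (val_mul (val_ofNat 3) (val_pow val_one 2))
              (val_mul (val_mul (val_ofNat 2) val_a₂) val_one)) val_a₄)
              (val_mul val_zero (val_neg val_one))) (by norm_num)
          · exact val_congr (val_sub (val_neg val_one) (val_neg (val_neg val_one)))
              (by norm_num)
        exact val_congr (val_addY val_one (val_neg val_one) hL) (by norm_num)
    · -- generic step: x ≠ 1
      set m : ℂ := (k : ℂ) + 1 with hm
      have hm0 : m ≠ 0 := by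
        rw [hm]
        exact Nat.cast_add_one_ne_zero k
      have hm1 : m + 1 ≠ 0 := by
        rw [hm]
        have : ((k + 2 : ℕ) : ℂ) ≠ 0 := Nat.cast_ne_zero.mpr (by omega)
        push_cast at this
        convert this using 1
        ring
      have hm2 : m ^ 2 ≠ 1 := by
        intro hE
        rw [hm] at hE
        have : (((k + 1) ^ 2 : ℕ) : ℂ) = ((1 : ℕ) : ℂ) := by push_cast; linear_combination hE
        have h2 : (k + 1) ^ 2 = 1 := Nat.cast_injective this
        nlinarith
      have hcne : ((m ^ 2)⁻¹ : ℂ) ≠ 1 := fun hE => hm2 (inv_eq_one.mp hE)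
      have hx1 : x ≠ 1 := by
        intro hE
        exact hcne (val_unique (hE ▸ hvx) val_one)
      have hL : Val (W3.slope x 1 y (-1)) ((-(m ^ 3)⁻¹ - (-1)) / ((m ^ 2)⁻¹ - 1)) := by
        rw [slope_of_X_ne hx1]
        exact val_div (val_sub hvy (val_neg val_one)) (val_sub hvx val_one)
          (sub_ne_zero.mpr hcne)
      have hmm : m ^ 2 - 1 ≠ 0 := sub_ne_zero.mpr hm2
      refine ⟨W3.addX x 1 (W3.slope x 1 y (-1)), W3.addY x 1 y (W3.slope x 1 y (-1)),
        nonsingular_add h hP fun hxy => hx1 hxy.left, ?_, ?_, ?_⟩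
      · rw [succ_nsmul, hsmul, Point.add_of_X_ne hx1]
      · refine val_congr (val_addX hvx hL) ?_
        push_cast
        rw [← hm]
        exact arith1 m hm0 hm1 (sub_ne_zero.mpr hcne)
      · refine val_congr (val_addY hvx hvy hL) ?_
        push_cast
        rw [← hm]
        exact arith2 m hm0 hm1 (sub_ne_zero.mpr hcne)

instance : CharZero (RatFunc ℂ) :=
  charZero_of_injective_algebraMap (algebraMap ℂ (RatFunc ℂ)).injective

open scoped Classical in
/-- The point `P = (1, −1)` lies on the curve `Y² = X³ + 4u³X² − 4u³X`
over `ℂ(u)` and has infinite order in the group of `ℂ(u)`-rational points. -/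
theorem fibration3_section_of_infinite_order :
    ∃ hP : W3.Nonsingular 1 (-1),
      ∀ n : ℤ, n ≠ 0 → n • WeierstrassCurve.Affine.Point.some _ _ hP ≠ 0 := by
  refine ⟨hP3, ?_⟩
  have main : ∀ nn : ℕ, (nn + 1) • (WeierstrassCurve.Affine.Point.some _ _ hP3) ≠ 0 := by
    intro nn
    obtain ⟨x, y, h, hs, -, -⟩ := key hP3 nn
    rw [hs]
    intro hE
    rw [WeierstrassCurve.Affine.Point.zero_def] at hE
    cases hE
  have pos : ∀ n : ℤ, 0 < n → n • WeierstrassCurve.Affine.Point.some _ _ hP3 ≠ 0 := by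
    intro n hn
    obtain ⟨k, hk⟩ : ∃ k : ℕ, n.toNat = k + 1 := ⟨n.toNat - 1, by omega⟩
    have e : n • WeierstrassCurve.Affine.Point.some _ _ hP3
        = ((k + 1 : ℕ) : ℤ) • WeierstrassCurve.Affine.Point.some _ _ hP3 := by
      rw [← hk, Int.toNat_of_nonneg (by omega)]
    rw [e, natCast_zsmul]
    exact main k
  intro n hn
  rcases lt_trichotomy n 0 with h | h | h
  · intro hE
    exact pos (-n) (by omega) (by simp [neg_smul, hE])
  · exact absurd h hn
  · exact pos n h
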